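/- A finite matroid M is pseudomodular if and only if for all flats A, B, C of M: whenever r(A/B) = r(A/C) = r(A/cl(B ∪ C)), it follows that r(A/B ∩ C) = r(A/B). -/
import Mathlib


/-- A matroid on a finite ground set `N`, given by an integer-valued rank
function satisfying the standard rank axioms. -/
structure FinMatroid (N : Type) [Fintype N] [DecidableEq N] where
  r : Finset N → ℤ
  r_nonneg : ∀ A, 0 ≤ r A
  r_le_card : ∀ A, r A ≤ (A.card : ℤ)
  r_mono : ∀ ⦃A B : Finset N⦄, A ⊆ B → r A ≤ r B
  submodular : ∀ A B, r (A ∪ B) + r (A ∩ B) ≤ r A + r B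

namespace FinMatroid

variable {N : Type} [Fintype N] [DecidableEq N]

/-- A set `F` is a flat if adding any element outside of `F` increases the rank. -/
def IsFlat (M : FinMatroid N) (F : Finset N) : Prop :=
  ∀ n ∉ F, M.r F < M.r (insert n F)

instance (M : FinMatroid N) (F : Finset N) : Decidable (M.IsFlat F) := by
  unfold IsFlat; infer_instance

/-- The Δ function of a (multi-indexed) family of sets: `Δ(C) = Σ_{S ⊆ I} (−1)^{|S|} r(F_S)`,
where `F_S` is the intersection of the members indexed by `S` for nonempty `S`, and
`F_∅` is the union of all members of the family. -/
def delta (M : FinMatroid N) {ι : Type} [Fintype ι] [DecidableEq ι]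
    (F : ι → Finset N) : ℤ :=
  ∑ S : Finset ι, (-1 : ℤ) ^ S.card *
    M.r (if S.Nonempty then S.inf F else Finset.univ.sup F)

/-- `M` is `n`-flat if `Δ(C) ≤ 0` for every family `C` of at most `n` flats. -/
def NFlat (M : FinMatroid N) (n : ℕ) : Prop :=
  ∀ (ι : Type) (_ : Fintype ι) (_ : DecidableEq ι) (F : ι → Finset N),
    Fintype.card ι ≤ n → (∀ i, M.IsFlat (F i)) → M.delta F ≤ 0

/-- `M` is totally flat if `Δ(C) ≤ 0` for every finite family `C` of flats. -/
def TotallyFlat (M : FinMatroid N) : Prop :=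
  ∀ (ι : Type) (_ : Fintype ι) (_ : DecidableEq ι) (F : ι → Finset N),
    (∀ i, M.IsFlat (F i)) → M.delta F ≤ 0

/-- `r(A/B) := r(A ∪ B) − r(B)`, the rank of `A` after contracting `B`. -/
def relRk (M : FinMatroid N) (A B : Finset N) : ℤ :=
  M.r (A ∪ B) - M.r B

/-- `B₀` is the pseudointersection of `A` and `B`: a flat `B₀ ⊆ B` such that for every
flat `B₁ ⊆ B`, `r(A/B₁) = r(A/B)` if and only if `B₀ ⊆ B₁`. -/
def IsPseudoInter (M : FinMatroid N) (A B B₀ : Finset N) : Prop :=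
  M.IsFlat B₀ ∧ B₀ ⊆ B ∧
    ∀ B₁, M.IsFlat B₁ → B₁ ⊆ B → (M.relRk A B₁ = M.relRk A B ↔ B₀ ⊆ B₁)

/-- `M` is pseudomodular if the pseudointersection of `A` and `B` exists for
all flats `A`, `B`. -/
def Pseudomodular (M : FinMatroid N) : Prop :=
  ∀ A B, M.IsFlat A → M.IsFlat B → ∃ B₀, M.IsPseudoInter A B B₀

/-- The closure of `A`: the smallest flat containing `A`, i.e. the intersection
of all flats containing `A`. -/
def cl (M : FinMatroid N) (A : Finset N) : Finset N :=
  Finset.univ.filter (fun x => ∀ F : Finset N, M.IsFlat F → A ⊆ F → x ∈ F)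

/-- A set `S` is cyclic if removing any element of `S` does not change its rank. -/
def Cyclic (M : FinMatroid N) (S : Finset N) : Prop :=
  ∀ n ∈ S, M.r (S.erase n) = M.r S

/-- A circuit is a minimal dependent set: it is dependent, and every proper
subset is independent. -/
def IsCircuit (M : FinMatroid N) (S : Finset N) : Prop :=
  M.r S < (S.card : ℤ) ∧ ∀ T ⊂ S, M.r T = (T.card : ℤ)

variable {N : Type} [Fintype N] [DecidableEq N] (M : FinMatroid N)

lemma relRk_anti (A : Finset N) {B₁ B₂ : Finset N} (h : B₁ ⊆ B₂) :
    M.relRk A B₂ ≤ M.relRk A B₁ := by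
  have hs := M.submodular (A ∪ B₁) B₂
  rw [Finset.union_assoc, Finset.union_eq_right.mpr h] at hs
  have hm := M.r_mono (Finset.subset_inter Finset.subset_union_right h :
    B₁ ⊆ (A ∪ B₁) ∩ B₂)
  unfold relRk
  linarith

lemma isFlat_univ : M.IsFlat (Finset.univ : Finset N) := by
  intro n hn
  exact absurd (Finset.mem_univ n) hn

lemma flat_insert_aux {F X : Finset N} (hF : M.IsFlat F) (hX : X ⊆ F) {n : N}
    (hn : n ∉ F) : M.r X < M.r (insert n X) := by
  by_contra h
  push_neg at h
  have he : M.r (insert n X) = M.r X :=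
    le_antisymm h (M.r_mono (Finset.subset_insert _ _))
  have hs := M.submodular (insert n X) F
  have h1 : insert n X ∪ F = insert n F := by
    rw [Finset.insert_union, Finset.union_eq_right.mpr hX]
  have h2 : insert n X ∩ F = X := by
    rw [Finset.insert_inter_of_notMem hn, Finset.inter_eq_left.mpr hX]
  rw [h1, h2] at hs
  have := hF n hn
  linarith

lemma isFlat_inter {F G : Finset N} (hF : M.IsFlat F) (hG : M.IsFlat G) :
    M.IsFlat (F ∩ G) := by
  intro n hn
  rw [Finset.mem_inter, not_and_or] at hn
  rcases hn with hn | hn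
  · exact M.flat_insert_aux hF Finset.inter_subset_left hn
  · exact M.flat_insert_aux hG Finset.inter_subset_right hn

/-- A nonempty ∩-closed family of flats has a minimum element. -/
lemma exists_min_flat (P : Finset N → Prop) [DecidablePred P]
    (hne : ∃ F, M.IsFlat F ∧ P F)
    (hcl : ∀ F G, M.IsFlat F → P F → M.IsFlat G → P G → P (F ∩ G)) :
    ∃ F₀, M.IsFlat F₀ ∧ P F₀ ∧ ∀ F, M.IsFlat F → P F → F₀ ⊆ F := by
  classical
  set T : Finset (Finset N) :=
    Finset.univ.filter (fun F => M.IsFlat F ∧ P F) with hT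
  have hTne : T.Nonempty := by
    obtain ⟨F, hF, hPF⟩ := hne
    exact ⟨F, by simp [hT, hF, hPF]⟩
  obtain ⟨F₀, hF₀T, hmin⟩ := Finset.exists_min_image T Finset.card hTne
  rw [hT, Finset.mem_filter] at hF₀T
  obtain ⟨-, hF₀flat, hPF₀⟩ := hF₀T
  refine ⟨F₀, hF₀flat, hPF₀, fun F hF hPF => ?_⟩
  have hmem : F₀ ∩ F ∈ T := by
    simp [hT, M.isFlat_inter hF₀flat hF, hcl F₀ F hF₀flat hPF₀ hF hPF]
  have hle := hmin _ hmem
  have hsub : F₀ ∩ F ⊆ F₀ := Finset.inter_subset_left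
  have : F₀ ∩ F = F₀ := Finset.eq_of_subset_of_card_le hsub hle
  calc F₀ = F₀ ∩ F := this.symm
    _ ⊆ F := Finset.inter_subset_right

lemma subset_cl (A : Finset N) : A ⊆ M.cl A := by
  intro x hx
  simp only [cl, Finset.mem_filter, Finset.mem_univ, true_and]
  exact fun F _ hAF => hAF hx

lemma cl_subset {A F : Finset N} (hF : M.IsFlat F) (hAF : A ⊆ F) :
    M.cl A ⊆ F := by
  intro x hx
  simp only [cl, Finset.mem_filter] at hx
  exact hx.2 F hF hAF

lemma isFlat_cl (A : Finset N) : M.IsFlat (M.cl A) := by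
  obtain ⟨F₀, hF₀flat, hAF₀, hmin⟩ :=
    M.exists_min_flat (fun F => A ⊆ F)
      ⟨Finset.univ, M.isFlat_univ, Finset.subset_univ A⟩
      (fun F G _ hPF _ hPG => Finset.subset_inter hPF hPG)
  have : M.cl A = F₀ := by
    apply Finset.Subset.antisymm (M.cl_subset hF₀flat hAF₀)
    intro x hx
    simp only [cl, Finset.mem_filter, Finset.mem_univ, true_and]
    exact fun F hF hAF => hmin F hF hAF hx
  rw [this]
  exact hF₀flat

end FinMatroid

/-- A finite matroid is pseudomodular if and only if for all flats `A, B, C`: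
whenever `r(A/B) = r(A/C) = r(A/cl(B ∪ C))`, it follows that `r(A/B ∩ C) = r(A/B)`. -/
theorem pseudomodular_iff {N : Type} [Fintype N] [DecidableEq N]
    (M : FinMatroid N) :
    M.Pseudomodular ↔
      ∀ A B C, M.IsFlat A → M.IsFlat B → M.IsFlat C →
        M.relRk A B = M.relRk A C →
        M.relRk A B = M.relRk A (M.cl (B ∪ C)) →
        M.relRk A (B ∩ C) = M.relRk A B := by
  classical
  constructor
  · -- Pseudomodular → condition
    intro h A B C hA hB hC h1 h2
    set D := M.cl (B ∪ C) with hD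
    have hDflat : M.IsFlat D := M.isFlat_cl _
    obtain ⟨B₀, hB₀flat, hB₀D, hiff⟩ := h A D hA hDflat
    have hBD : B ⊆ D :=
      (Finset.subset_union_left).trans (M.subset_cl (B ∪ C))
    have hCD : C ⊆ D :=
      (Finset.subset_union_right).trans (M.subset_cl (B ∪ C))
    have hB₀B : B₀ ⊆ B := (hiff B hB hBD).mp h2
    have hB₀C : B₀ ⊆ C := (hiff C hC hCD).mp (h1.symm.trans h2)
    have hBC : M.IsFlat (B ∩ C) := M.isFlat_inter hB hC
    have := (hiff (B ∩ C) hBC (Finset.inter_subset_left.trans hBD)).mpr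
      (Finset.subset_inter hB₀B hB₀C)
    rw [this, ← h2]
  · -- condition → Pseudomodular
    intro h A B hA hB
    have hcl : ∀ F G, M.IsFlat F → (F ⊆ B ∧ M.relRk A F = M.relRk A B) →
        M.IsFlat G → (G ⊆ B ∧ M.relRk A G = M.relRk A B) →
        (F ∩ G ⊆ B ∧ M.relRk A (F ∩ G) = M.relRk A B) := by
      rintro F G hF ⟨hFB, hFr⟩ hG ⟨hGB, hGr⟩
      refine ⟨Finset.inter_subset_left.trans hFB, ?_⟩
      have hclB : M.cl (F ∪ G) ⊆ B := M.cl_subset hB (Finset.union_subset hFB hGB)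
      have h1 : M.relRk A F = M.relRk A (M.cl (F ∪ G)) := by
        have hlow := M.relRk_anti A
          ((Finset.subset_union_left :
            F ⊆ F ∪ G).trans (M.subset_cl (F ∪ G)))
        have hhigh := M.relRk_anti A hclB
        omega
      have := h A F G hA hF hG (hFr.trans hGr.symm) h1
      rw [this, hFr]
    obtain ⟨B₀, hB₀flat, ⟨hB₀B, hB₀r⟩, hmin⟩ :=
      M.exists_min_flat (fun F => F ⊆ B ∧ M.relRk A F = M.relRk A B)
        ⟨B, hB, Finset.Subset.refl B, rfl⟩ hcl
    refine ⟨B₀, hB₀flat, hB₀B, fun B₁ hB₁ hB₁B => ⟨fun hr => ?_, fun hsub => ?_⟩⟩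
    · exact hmin B₁ hB₁ ⟨hB₁B, hr⟩
    · have h1 := M.relRk_anti A hB₁B
      have h2 := M.relRk_anti A hsub
      omega
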